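/- Let φ : (G′,g′) → (G,g) be a finite harmonic morphism of connected weighted graphs. Then χ(G′) = deg(φ)·χ(G) − Ram(φ), where Ram(φ) = Σ_{v′∈V(G′)} Ram_φ(v′) (the global Riemann–Hurwitz formula). In particular, if φ is unramified then χ(G′) = deg(φ)·χ(G). -/
import Mathlib


namespace TropDR

open Finset

/-- `Finset.filter` with classical decidability. -/
noncomputable def cfilter {α : Type*} (p : α → Prop) (s : Finset α) : Finset α :=
  @Finset.filter α p (Classical.decPred p) s

/-- A graph with legs: a finite set `X` together with an idempotent root map `rt`
and an involution `inv` fixing every root vertex. -/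
structure PGraph where
  X : Type
  [fintypeX : Fintype X]
  [decEqX : DecidableEq X]
  rt : X → X
  inv : X → X
  rt_idem : ∀ x, rt (rt x) = rt x
  inv_invol : ∀ x, inv (inv x) = x
  inv_fix_rt : ∀ x, inv (rt x) = rt x

attribute [instance] PGraph.fintypeX PGraph.decEqX

namespace PGraph

variable (G : PGraph)

/-- Vertices are the fixed points (= the image) of the root map. -/
def IsVertex (x : G.X) : Prop := G.rt x = x

/-- Half-edges are the non-vertices. -/
def IsHalf (x : G.X) : Prop := G.rt x ≠ x

/-- Legs are the `inv`-fixed half-edges. -/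
def IsLeg (x : G.X) : Prop := G.IsHalf x ∧ G.inv x = x

/-- Halves of genuine edges: half-edges moved by the involution. -/
def IsEdgeHalf (x : G.X) : Prop := G.IsHalf x ∧ G.inv x ≠ x

noncomputable def vertexSet : Finset G.X := cfilter (fun x => G.IsVertex x) Finset.univ

noncomputable def legSet : Finset G.X := cfilter (fun x => G.IsLeg x) Finset.univ

noncomputable def edgeHalfSet : Finset G.X := cfilter (fun x => G.IsEdgeHalf x) Finset.univ

/-- Tangent directions at a vertex `v`: half-edges rooted at `v`. -/
noncomputable def tangents (v : G.X) : Finset G.X :=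
  cfilter (fun h => G.IsHalf h ∧ G.rt h = v) Finset.univ

noncomputable def valence (v : G.X) : ℕ := (G.tangents v).card

/-- The number of edges: half the number of edge half-edges. -/
noncomputable def numEdges : ℕ := G.edgeHalfSet.card / 2

noncomputable def numLegs : ℕ := G.legSet.card

noncomputable def numVertices : ℕ := G.vertexSet.card

/-- Connectedness: the equivalence relation generated by `x ∼ rt x` and `x ∼ inv x`
has a single class (and `X` is nonempty). -/
def Connected : Prop :=
  Nonempty G.X ∧ ∀ x y : G.X, Relation.EqvGen (fun a b => G.rt a = b ∨ G.inv a = b) x y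

/-- A subgraph: a subset of `X` closed under the root map and the involution. -/
def IsSubgraph (F : Finset G.X) : Prop :=
  (∀ x ∈ F, G.rt x ∈ F) ∧ (∀ x ∈ F, G.inv x ∈ F)

/-- Valency of `v` inside a subgraph `F`. -/
noncomputable def valIn (F : Finset G.X) (v : G.X) : ℕ := (G.tangents v ∩ F).card

end PGraph

/-- A morphism of graphs: commutes with the root maps and involutions,
and maps no edge into a leg. -/
structure GraphHom (G' G : PGraph) where
  toFun : G'.X → G.X
  map_rt : ∀ x, toFun (G'.rt x) = G.rt (toFun x)
  map_inv : ∀ x, toFun (G'.inv x) = G.inv (toFun x)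
  edge_not_leg : ∀ h, G'.IsEdgeHalf h → ¬ G.IsLeg (toFun h)

/-- A harmonic morphism of graphs: a graph morphism together with a degree function. -/
structure HarmonicHom (G' G : PGraph) extends GraphHom G' G where
  deg : G'.X → ℕ
  deg_edge : ∀ h, G'.IsEdgeHalf h → deg (G'.inv h) = deg h
  deg_zero_iff : ∀ h, G'.IsHalf h → (deg h = 0 ↔ G.IsVertex (toFun h))
  harmonic : ∀ v', G'.IsVertex v' → ∀ h, G.IsHalf h → G.rt h = toFun v' →
    deg v' = ∑ h' ∈ cfilter (fun h' => toFun h' = h) (G'.tangents v'), deg h'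

namespace HarmonicHom

variable {G' G : PGraph} (φ : HarmonicHom G' G)

/-- A harmonic morphism is finite if it has positive degree on every half-edge. -/
def Finite : Prop := ∀ h, G'.IsHalf h → 0 < φ.deg h

/-- The sum of the degrees over the vertex fiber of `v`. -/
noncomputable def vertexFiberDeg (v : G.X) : ℕ :=
  ∑ v' ∈ cfilter (fun v' => φ.toFun v' = v) G'.vertexSet, φ.deg v'

end HarmonicHom

/-- A weighted graph: a graph together with a genus function on (all elements;
only the values at vertices are relevant). -/
structure WGraph extends PGraph where
  gw : X → ℕ

namespace WGraph

variable (G : WGraph)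

/-- The genus of a (connected) weighted graph. -/
noncomputable def genus : ℤ :=
  (G.toPGraph.numEdges : ℤ) - (G.toPGraph.numVertices : ℤ) + 1 +
    ∑ v ∈ G.toPGraph.vertexSet, (G.gw v : ℤ)

/-- The Euler characteristic of a vertex. -/
noncomputable def chiV (v : G.X) : ℤ :=
  2 - 2 * (G.gw v : ℤ) - (G.toPGraph.valence v : ℤ)

/-- The Euler characteristic of a (connected) weighted graph. -/
noncomputable def chi : ℤ := 2 - 2 * G.genus - (G.toPGraph.numLegs : ℤ)

end WGraph

/-- The ramification degree of a (finite) harmonic morphism of weighted graphs at `v'`. -/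
noncomputable def ram {G' G : WGraph} (φ : HarmonicHom G'.toPGraph G.toPGraph) (v' : G'.X) : ℤ :=
  (φ.deg v' : ℤ) * G.chiV (φ.toFun v') - G'.chiV v'

def Unramified {G' G : WGraph} (φ : HarmonicHom G'.toPGraph G.toPGraph) : Prop :=
  ∀ v', G'.toPGraph.IsVertex v' → ram φ v' = 0

def Effective {G' G : WGraph} (φ : HarmonicHom G'.toPGraph G.toPGraph) : Prop :=
  ∀ v', G'.toPGraph.IsVertex v' → 0 ≤ ram φ v'

section Aux

lemma mem_cfilter {α : Type*} {p : α → Prop} {s : Finset α} {x : α} :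
    x ∈ cfilter p s ↔ x ∈ s ∧ p x := by
  unfold cfilter
  exact @Finset.mem_filter _ _ (Classical.decPred p) _ _

namespace PGraph
variable (G : PGraph)

lemma mem_vertexSet {x : G.X} : x ∈ G.vertexSet ↔ G.IsVertex x := by
  simp [vertexSet, mem_cfilter]

lemma sum_valence :
    ∑ v ∈ G.vertexSet, G.valence v = G.edgeHalfSet.card + G.legSet.card := by
  classical
  have hdisj : Disjoint G.edgeHalfSet G.legSet := by
    rw [Finset.disjoint_left]
    intro a ha hb
    rw [edgeHalfSet, mem_cfilter] at ha
    rw [legSet, mem_cfilter] at hb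
    exact ha.2.2 hb.2.2
  rw [← Finset.card_union_of_disjoint hdisj]
  have hunion : G.edgeHalfSet ∪ G.legSet = cfilter (fun x => G.IsHalf x) univ := by
    ext x
    simp only [Finset.mem_union, edgeHalfSet, legSet, mem_cfilter, IsEdgeHalf, IsLeg,
      Finset.mem_univ, true_and]
    tauto
  rw [hunion]
  have hmaps : ∀ x ∈ cfilter (fun x => G.IsHalf x) (univ : Finset G.X),
      G.rt x ∈ G.vertexSet := by
    intro x _
    rw [G.mem_vertexSet]
    exact G.rt_idem x
  rw [Finset.card_eq_sum_card_fiberwise hmaps]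
  refine Finset.sum_congr rfl fun v _ => ?_
  unfold valence
  congr 1
  ext h
  simp only [Finset.mem_filter, tangents, mem_cfilter, Finset.mem_univ, true_and]

lemma two_dvd_edgeHalfSet_card : 2 ∣ G.edgeHalfSet.card := by
  classical
  have h : ∑ _x ∈ G.edgeHalfSet, (1 : ZMod 2) = 0 := by
    refine Finset.sum_involution (fun a _ => G.inv a) (fun a _ => by decide)
      (fun a ha _ => ?_) (fun a ha => ?_) (fun a _ => G.inv_invol a)
    · simp only [PGraph.edgeHalfSet, mem_cfilter] at ha
      exact ha.2.2
    · simp only [PGraph.edgeHalfSet, mem_cfilter] at ha ⊢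
      refine ⟨Finset.mem_univ _, ?_, ?_⟩
      · intro hc
        have h1 : G.inv (G.inv a) = G.inv a := by
          conv_lhs => rw [← hc]
          rw [G.inv_fix_rt, hc]
        rw [G.inv_invol] at h1
        exact ha.2.2 h1.symm
      · intro hc
        rw [G.inv_invol] at hc
        exact ha.2.2 hc.symm
  rw [Finset.sum_const, nsmul_eq_mul, mul_one] at h
  exact (ZMod.natCast_eq_zero_iff _ 2).mp h

lemma two_mul_numEdges : 2 * G.numEdges = G.edgeHalfSet.card :=
  Nat.mul_div_cancel' G.two_dvd_edgeHalfSet_card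

end PGraph

namespace WGraph
variable (G : WGraph)

lemma chi_eq_sum : G.chi = ∑ v ∈ G.toPGraph.vertexSet, G.chiV v := by
  have hval := G.toPGraph.sum_valence
  have hE := G.toPGraph.two_mul_numEdges
  have hcast : (G.toPGraph.edgeHalfSet.card : ℤ) = 2 * (G.toPGraph.numEdges : ℤ) := by
    exact_mod_cast hE.symm
  have hval' : (∑ v ∈ G.toPGraph.vertexSet, (G.toPGraph.valence v : ℤ))
      = (G.toPGraph.edgeHalfSet.card : ℤ) + (G.toPGraph.legSet.card : ℤ) := by
    exact_mod_cast hval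
  have hR : ∑ v ∈ G.toPGraph.vertexSet, G.chiV v
      = 2 * (G.toPGraph.vertexSet.card : ℤ)
        - 2 * (∑ v ∈ G.toPGraph.vertexSet, (G.gw v : ℤ))
        - ∑ v ∈ G.toPGraph.vertexSet, (G.toPGraph.valence v : ℤ) := by
    unfold WGraph.chiV
    rw [Finset.sum_sub_distrib, Finset.sum_sub_distrib, Finset.sum_const, Finset.mul_sum,
      nsmul_eq_mul]
    ring
  rw [hR, hval']
  unfold WGraph.chi WGraph.genus PGraph.numLegs PGraph.numVertices
  linarith [hcast]

end WGraph

end Aux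

/-- **global Riemann–Hurwitz formula.** Let `φ : (G',g') → (G,g)` be a finite
harmonic morphism of connected weighted graphs, of degree `D` (i.e. the vertex fiber
sums of the degree function all equal `D`).  Then
`χ(G') = deg(φ)·χ(G) − Ram(φ)` where `Ram(φ) = Σ_{v' ∈ V(G')} Ram_φ(v')`.
In particular, if `φ` is unramified then `χ(G') = deg(φ)·χ(G)`. -/
theorem global_riemann_hurwitz
    (G' G : WGraph) (hG' : G'.toPGraph.Connected) (hG : G.toPGraph.Connected)
    (φ : HarmonicHom G'.toPGraph G.toPGraph) (hfin : φ.Finite)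
    (D : ℕ) (hD : ∀ v, G.toPGraph.IsVertex v → φ.vertexFiberDeg v = D) :
    G'.chi = (D : ℤ) * G.chi - ∑ v' ∈ G'.toPGraph.vertexSet, ram φ v' ∧
    (Unramified φ → G'.chi = (D : ℤ) * G.chi) := by
  classical
  have hmaps : ∀ v' ∈ G'.toPGraph.vertexSet, φ.toFun v' ∈ G.toPGraph.vertexSet := by
    intro v' hv'
    rw [PGraph.mem_vertexSet] at hv' ⊢
    unfold PGraph.IsVertex at hv' ⊢
    rw [← φ.map_rt, hv']
  have hfib := Finset.sum_fiberwise_of_maps_to hmaps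
    (fun v' => (φ.deg v' : ℤ) * G.chiV (φ.toFun v'))
  have hmain : ∑ v' ∈ G'.toPGraph.vertexSet, (φ.deg v' : ℤ) * G.chiV (φ.toFun v')
      = (D : ℤ) * G.chi := by
    rw [← hfib, G.chi_eq_sum, Finset.mul_sum]
    refine Finset.sum_congr rfl fun v hv => ?_
    have hfilter : Finset.filter (fun v' => φ.toFun v' = v) G'.toPGraph.vertexSet
        = cfilter (fun v' => φ.toFun v' = v) G'.toPGraph.vertexSet := by
      ext x
      rw [Finset.mem_filter, mem_cfilter]
    have hsum : ∑ v' ∈ Finset.filter (fun v' => φ.toFun v' = v) G'.toPGraph.vertexSet,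
        (φ.deg v' : ℤ) * G.chiV (φ.toFun v')
        = ∑ v' ∈ Finset.filter (fun v' => φ.toFun v' = v) G'.toPGraph.vertexSet,
          (φ.deg v' : ℤ) * G.chiV v := by
      refine Finset.sum_congr rfl fun v' hv' => ?_
      rw [(Finset.mem_filter.mp hv').2]
    rw [hsum, ← Finset.sum_mul]
    have hdeg : ∑ v' ∈ Finset.filter (fun v' => φ.toFun v' = v) G'.toPGraph.vertexSet,
        (φ.deg v' : ℤ) = (D : ℤ) := by
      have := hD v ((G.toPGraph.mem_vertexSet).mp hv)
      unfold HarmonicHom.vertexFiberDeg at this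
      rw [hfilter, ← this]
      exact_mod_cast rfl
    rw [hdeg, mul_comm]
  have hram : ∑ v' ∈ G'.toPGraph.vertexSet, ram φ v'
      = (D : ℤ) * G.chi - G'.chi := by
    unfold ram
    rw [Finset.sum_sub_distrib, hmain, ← G'.chi_eq_sum]
  constructor
  · omega
  · intro hunr
    have hz : ∑ v' ∈ G'.toPGraph.vertexSet, ram φ v' = 0 := by
      refine Finset.sum_eq_zero fun v' hv' => ?_
      exact hunr v' ((G'.toPGraph.mem_vertexSet).mp hv')
    rw [hz] at hram
    omega

end TropDR
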